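/- Let (X_t) be a nonnegative sequence with X_{t+1} ≤ (1 - β_t(1-κ)) X_t + C β_t + ζ_t, where κ ∈ (0,1), β_t ∈ (0,1] with Σ β_t = ∞ and β_t → 0, C ≥ 0, and ζ_t ≥ 0 with ζ_t/β_t → 0. Then limsup_t X_t ≤ C/(1-κ). -/

import Mathlib

open Filter Finset

/-- Stochastic-approximation tracking recursion: if `X_{t+1} ≤ (1 - β_t(1-κ)) X_t + C β_t + ζ_t`
with `κ ∈ (0,1)`, stepsizes `β_t ∈ (0,1]` satisfying `∑ β_t = ∞` and `β_t → 0`, `C ≥ 0`,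
and perturbations `ζ_t ≥ 0` with `ζ_t / β_t → 0`, then `limsup_t X_t ≤ C / (1 - κ)`. -/
theorem stmt16 (κ C : ℝ) (hκ0 : 0 < κ) (hκ1 : κ < 1) (hC : 0 ≤ C)
    (X β ζ : ℕ → ℝ)
    (hX0 : ∀ t, 0 ≤ X t)
    (hβ : ∀ t, 0 < β t ∧ β t ≤ 1)
    (hβdiv : Filter.Tendsto (fun n => ∑ s ∈ Finset.range n, β s) Filter.atTop Filter.atTop)
    (hβ0 : Filter.Tendsto β Filter.atTop (nhds 0))
    (hζ0 : ∀ t, 0 ≤ ζ t)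
    (hζ : Filter.Tendsto (fun t => ζ t / β t) Filter.atTop (nhds 0))
    (hrec : ∀ t, X (t + 1) ≤ (1 - β t * (1 - κ)) * X t + C * β t + ζ t) :
    Filter.limsup X Filter.atTop ≤ C / (1 - κ) := by
  have h1κ : (0:ℝ) < 1 - κ := by linarith
  set L := C / (1 - κ) with hL
  clear_value L
  have hLC : (1 - κ) * L = C := by rw [hL]; field_simp [h1κ.ne']
  have key : ∀ ε > (0:ℝ), ∀ᶠ t in atTop, X t ≤ L + ε := by
    intro ε hε
    have hε2 : (0:ℝ) < ε/2 := by linarith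
    have hev : ∀ᶠ t in atTop, ζ t ≤ ε/2 * (1-κ) * β t := by
      have h0 : (0:ℝ) < ε/2*(1-κ) := by positivity
      filter_upwards [hζ.eventually (gt_mem_nhds h0)] with t ht
      have hb := (hβ t).1
      rw [div_lt_iff₀ hb] at ht
      linarith
    obtain ⟨t0, ht0⟩ := eventually_atTop.1 hev
    set M := L + ε/2 with hM
    clear_value M
    have hcontr : ∀ t, t0 ≤ t → X (t+1) - M ≤ (1 - β t * (1-κ)) * (X t - M) := by
      intro t ht
      have h1 := hrec t
      have h2 := ht0 t ht
      have hMeq : (1-κ) * M = C + ε/2*(1-κ) := by rw [hM, mul_add, hLC]; ring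
      have h4 : β t * (1-κ) * M = C * β t + ε/2*(1-κ)*β t := by
        rw [mul_assoc, hMeq]; ring
      nlinarith [h1, h2, h4]
    set Y : ℕ → ℝ := fun n => max (X (t0 + n) - M) 0 with hY
    have hYnn : ∀ n, 0 ≤ Y n := fun n => le_max_right _ _
    have hc0 : ∀ t, 0 ≤ 1 - β t * (1-κ) := by
      intro t; nlinarith [(hβ t).1, (hβ t).2]
    have hYstep : ∀ n, Y (n+1) ≤ (1 - β (t0+n) * (1-κ)) * Y n := by
      intro n
      apply max_le
      · calc X (t0+n+1) - M ≤ (1 - β (t0+n)*(1-κ)) * (X (t0+n) - M) :=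
              hcontr _ (Nat.le_add_right _ _)
          _ ≤ (1 - β (t0+n)*(1-κ)) * Y n :=
              mul_le_mul_of_nonneg_left (le_max_left _ _) (hc0 _)
      · exact mul_nonneg (hc0 _) (hYnn n)
    have hYind : ∀ n, Y n ≤ (∏ s ∈ range n, (1 - β (t0+s)*(1-κ))) * Y 0 := by
      intro n
      induction n with
      | zero => simp
      | succ n ih =>
        calc Y (n+1) ≤ (1 - β (t0+n)*(1-κ)) * Y n := hYstep n
          _ ≤ (1 - β (t0+n)*(1-κ)) * ((∏ s ∈ range n, (1 - β (t0+s)*(1-κ))) * Y 0) :=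
              mul_le_mul_of_nonneg_left ih (hc0 _)
          _ = (∏ s ∈ range (n+1), (1 - β (t0+s)*(1-κ))) * Y 0 := by
              rw [prod_range_succ]; ring
    have hprodnn : ∀ n, 0 ≤ ∏ s ∈ range n, (1 - β (t0+s)*(1-κ)) :=
      fun n => Finset.prod_nonneg (fun s _ => hc0 _)
    have hprod : ∀ n, (∏ s ∈ range n, (1 - β (t0+s)*(1-κ)))
        ≤ Real.exp (-(1-κ) * ∑ s ∈ range n, β (t0+s)) := by
      intro n
      calc (∏ s ∈ range n, (1 - β (t0+s)*(1-κ)))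
          ≤ ∏ s ∈ range n, Real.exp (-(β (t0+s)*(1-κ))) := by
            apply Finset.prod_le_prod (fun s _ => hc0 _)
            intro s _
            have := Real.add_one_le_exp (-(β (t0+s)*(1-κ)))
            linarith
        _ = Real.exp (∑ s ∈ range n, -(β (t0+s)*(1-κ))) := (Real.exp_sum _ _).symm
        _ = Real.exp (-(1-κ) * ∑ s ∈ range n, β (t0+s)) := by
            congr 1
            rw [Finset.mul_sum]
            apply Finset.sum_congr rfl
            intro s _; ring
    have hsum : Tendsto (fun n => ∑ s ∈ range n, β (t0+s)) atTop atTop := by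
      have hmono : Tendsto (fun n : ℕ => t0 + n) atTop atTop :=
        tendsto_atTop_mono (fun n => Nat.le_add_left n t0) tendsto_id
      have hcomp : Tendsto (fun n => ∑ s ∈ range (t0+n), β s) atTop atTop :=
        hβdiv.comp hmono
      have heq : ∀ n, ∑ s ∈ range n, β (t0+s)
          = (∑ s ∈ range (t0+n), β s) + -(∑ s ∈ range t0, β s) := by
        intro n; rw [Finset.sum_range_add]; ring
      simp only [heq]
      exact tendsto_atTop_add_const_right _ _ hcomp
    have hexp : Tendsto (fun n => Real.exp (-(1-κ) * ∑ s ∈ range n, β (t0+s)) * Y 0)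
        atTop (nhds 0) := by
      have hneg : Tendsto (fun n => -(1-κ) * ∑ s ∈ range n, β (t0+s)) atTop atBot :=
        Tendsto.const_mul_atTop_of_neg (by linarith) hsum
      have := (Real.tendsto_exp_atBot.comp hneg).mul_const (Y 0)
      simpa using this
    have hYtend : Tendsto Y atTop (nhds 0) := by
      apply tendsto_of_tendsto_of_tendsto_of_le_of_le tendsto_const_nhds hexp hYnn
      intro n
      exact le_trans (hYind n) (mul_le_mul_of_nonneg_right (hprod n) (hYnn 0))
    have hYsmall : ∀ᶠ n in atTop, Y n < ε/2 := hYtend.eventually_lt_const hε2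
    obtain ⟨N, hN⟩ := eventually_atTop.1 hYsmall
    rw [eventually_atTop]
    refine ⟨t0 + N, fun t ht => ?_⟩
    have ht0t : t0 ≤ t := le_trans (Nat.le_add_right _ _) ht
    have hNt : N ≤ t - t0 := by omega
    have hte : t0 + (t - t0) = t := by omega
    have := hN (t - t0) hNt
    have hXle : X t - M ≤ Y (t - t0) := by rw [hY]; simp only [hte]; exact le_max_left _ _
    have : X t - M < ε/2 := lt_of_le_of_lt hXle this
    rw [hM] at this; linarith
  have hbdd : IsCoboundedUnder (· ≤ ·) atTop X := by
    have hb : IsBoundedUnder (· ≥ ·) atTop X := isBoundedUnder_of ⟨0, fun t => hX0 t⟩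
    exact hb.isCoboundedUnder_le
  refine le_of_forall_pos_le_add fun ε hε => ?_
  exact Filter.limsup_le_of_le hbdd ((key ε hε).mono fun t ht => ht)
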